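/- arXiv:math/0612582 — 5 statements merged into one kernel-verified Lean document; each statement's English description precedes it below -/
import Mathlib

section
/- Let F = x₀·f_{d-1} + f_d and a ∈ ℙⁿ⁻¹. Both plane hypersurfaces Z(f_{d-1}) and Z(f_d) are singular at a (i.e., ∇f_{d-1}(a) = ∇f_d(a) = 0) if and only if every point of the line L_a is a singular point of Z(F). -/
open MvPolynomial

section Aux

variable {K : Type*} [CommRing K] {n : ℕ}

lemma aux_degree_fintype (u : Fin n →₀ ℕ) : u.degree = ∑ j, u j :=
  Finset.sum_subset (Finset.subset_univ _)
    (fun _ _ hx => Finsupp.notMem_support_iff.mp hx)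

lemma aux_deg {m : ℕ} {φ : MvPolynomial (Fin n) K}
    (hφ : φ.IsHomogeneous m) {u : Fin n →₀ ℕ} (hu : coeff u φ ≠ 0) :
    ∑ j, u j = m := by
  have := hφ hu
  simp [Finsupp.weight_apply, Finsupp.sum_fintype] at this
  exact this

lemma aux_scale {m : ℕ} (a : Fin n → K) (t : K) {φ : MvPolynomial (Fin n) K}
    (hφ : φ.IsHomogeneous m) :
    eval (fun j => t * a j) φ = t ^ m * eval a φ := by
  conv_lhs => rw [φ.as_sum]
  conv_rhs => rw [φ.as_sum]
  rw [map_sum, map_sum, Finset.mul_sum]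
  refine Finset.sum_congr rfl fun u hu => ?_
  rw [eval_monomial, eval_monomial, Finsupp.prod_fintype _ _ (fun _ => pow_zero _),
    Finsupp.prod_fintype _ _ (fun _ => pow_zero _)]
  simp_rw [mul_pow]
  rw [Finset.prod_mul_distrib, Finset.prod_pow_eq_pow_sum,
    aux_deg hφ (mem_support_iff.mp hu)]
  ring

lemma aux_euler {m : ℕ} (a : Fin n → K) {φ : MvPolynomial (Fin n) K}
    (hφ : φ.IsHomogeneous m) :
    ∑ j, a j * eval a (pderiv j φ) = (m : K) * eval a φ := by
  conv_lhs => rw [φ.as_sum]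
  conv_rhs => rw [φ.as_sum]
  simp only [map_sum, Finset.mul_sum]
  rw [Finset.sum_comm]
  refine Finset.sum_congr rfl fun u hu => ?_
  have hdeg : ∑ j, u j = m := aux_deg hφ (mem_support_iff.mp hu)
  subst hdeg
  push_cast
  rw [Finset.sum_mul]
  refine Finset.sum_congr rfl fun j _ => ?_
  rw [pderiv_monomial, eval_monomial, eval_monomial,
    Finsupp.prod_fintype _ _ (fun _ => pow_zero _),
    Finsupp.prod_fintype _ _ (fun _ => pow_zero _)]
  rcases Nat.eq_zero_or_pos (u j) with h0 | h0
  · simp [h0]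
  · have hprod : ∏ i, a i ^ ((u - Finsupp.single j 1 : Fin n →₀ ℕ) i)
        = a j ^ (u j - 1) * ∏ i ∈ Finset.univ.erase j, a i ^ u i := by
      rw [← Finset.mul_prod_erase Finset.univ _ (Finset.mem_univ j)]
      congr 1
      · congr 1
        simp [Finsupp.sub_apply]
      · refine Finset.prod_congr rfl fun i hi => ?_
        have : i ≠ j := Finset.ne_of_mem_erase hi
        simp [Finsupp.sub_apply, Finsupp.single_apply, Ne.symm this]
    have hprod2 : ∏ i, a i ^ u i
        = a j ^ u j * ∏ i ∈ Finset.univ.erase j, a i ^ u i := by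
      rw [← Finset.mul_prod_erase Finset.univ _ (Finset.mem_univ j)]
    rw [hprod, hprod2]
    have : a j * a j ^ (u j - 1) = a j ^ u j := by
      rw [← pow_succ']
      congr 1
      omega
    calc a j * (coeff u φ * ↑(u j) * (a j ^ (u j - 1) * ∏ i ∈ Finset.univ.erase j, a i ^ u i))
        = (u j : K) * (coeff u φ * ((a j * a j ^ (u j - 1)) * ∏ i ∈ Finset.univ.erase j, a i ^ u i)) := by ring
      _ = (u j : K) * (coeff u φ * (a j ^ u j * ∏ i ∈ Finset.univ.erase j, a i ^ u i)) := by rw [this]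

lemma aux_pderiv_hom {m : ℕ} {φ : MvPolynomial (Fin n) K}
    (hφ : φ.IsHomogeneous m) (i : Fin n) :
    (pderiv i φ).IsHomogeneous (m - 1) := by
  rw [φ.as_sum, map_sum]
  refine IsHomogeneous.sum _ _ _ fun u hu => ?_
  rw [pderiv_monomial]
  rcases Nat.eq_zero_or_pos (u i) with h0 | h0
  · simp only [h0, Nat.cast_zero, mul_zero]
    rw [monomial_zero]
    exact isHomogeneous_zero _ _ _
  · apply isHomogeneous_monomial
    have hdeg : ∑ j, u j = m := aux_deg hφ (mem_support_iff.mp hu)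
    set v : Fin n →₀ ℕ := u - Finsupp.single i 1 with hv
    have e1 : ∑ j, u j = u i + ∑ j ∈ Finset.univ.erase i, u j :=
      (Finset.add_sum_erase _ (fun j => u j) (Finset.mem_univ i)).symm
    have e2 : ∑ j, v j = v i + ∑ j ∈ Finset.univ.erase i, v j :=
      (Finset.add_sum_erase _ (fun j => v j) (Finset.mem_univ i)).symm
    have h1 : v i = u i - 1 := by simp [hv]
    have h2 : ∀ j ∈ Finset.univ.erase i, v j = u j := by
      intro j hj
      have hne : j ≠ i := Finset.ne_of_mem_erase hj
      simp [hv, Finsupp.single_apply, Ne.symm hne]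
    rw [Finset.sum_congr rfl h2, h1] at e2
    have hS : u i + ∑ j ∈ Finset.univ.erase i, u j = m := by rw [← e1]; exact hdeg
    have hfin : v.degree = m - 1 := by
      rw [aux_degree_fintype, e2]
      show u i - 1 + ∑ j ∈ Finset.univ.erase i, u j = m - 1
      omega
    simpa using hfin

lemma aux_pderiv_zero_rename (q : MvPolynomial (Fin n) K) :
    pderiv (0 : Fin (n + 1)) (rename Fin.succ q) = 0 := by
  apply pderiv_eq_zero_of_notMem_vars
  intro hmem
  obtain ⟨j, -, hj⟩ := Finset.mem_image.mp (vars_rename _ _ hmem)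
  exact Fin.succ_ne_zero j hj

end Aux

def SingularAt {K : Type*} [CommRing K] {n : ℕ} (F : MvPolynomial (Fin (n + 1)) K)
    (P : Fin (n + 1) → K) : Prop :=
  eval P F = 0 ∧ ∀ i, eval P (pderiv i F) = 0

/-- both `Z(f_{d-1})` and `Z(f_d)` are singular at `a` (all gradients vanish)
iff every point of the line `L_a` is singular on `Z(x₀ f_{d-1} + f_d)`. -/
theorem stmt2 {K : Type*} [Field K] [CharZero K] [IsAlgClosed K] {n d : ℕ} (hd : 3 ≤ d)
    (g h : MvPolynomial (Fin n) K)
    (hg : g.IsHomogeneous (d - 1)) (hh : h.IsHomogeneous d) (hg0 : g ≠ 0)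
    (a : Fin n → K) (ha : a ≠ 0) :
    ((∀ j : Fin n, eval a (pderiv j g) = 0) ∧ ∀ j : Fin n, eval a (pderiv j h) = 0) ↔
      ∀ s t : K, SingularAt (X 0 * rename Fin.succ g + rename Fin.succ h)
        (Fin.cons s (fun j => t * a j)) := by
  set F : MvPolynomial (Fin (n + 1)) K := X 0 * rename Fin.succ g + rename Fin.succ h with hF
  have hcomp : ∀ s t : K, (Fin.cons s (fun j => t * a j) : Fin (n + 1) → K) ∘ Fin.succ
      = fun j => t * a j := by
    intro s t
    funext j
    simp
  have heval_rename : ∀ (s t : K) (q : MvPolynomial (Fin n) K),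
      eval (Fin.cons s (fun j => t * a j)) (rename Fin.succ q)
      = eval (fun j => t * a j) q := by
    intro s t q
    rw [eval_rename, hcomp]
  have hD0 : pderiv (0 : Fin (n + 1)) F = rename Fin.succ g := by
    rw [hF]
    simp [pderiv_mul, aux_pderiv_zero_rename]
  have hDs : ∀ j : Fin n, pderiv (Fin.succ j) F
      = X 0 * rename Fin.succ (pderiv j g) + rename Fin.succ (pderiv j h) := by
    intro j
    rw [hF]
    simp [pderiv_mul, pderiv_X_of_ne (Fin.succ_ne_zero j).symm,
      pderiv_rename (Fin.succ_injective n)]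
  constructor
  · rintro ⟨hga, hha⟩ s t
    have hga0 : eval a g = 0 := by
      have he := aux_euler a hg
      simp only [hga, mul_zero, Finset.sum_const_zero] at he
      have hne : ((d - 1 : ℕ) : K) ≠ 0 := Nat.cast_ne_zero.mpr (by omega)
      exact (mul_eq_zero.mp he.symm).resolve_left hne
    have hha0 : eval a h = 0 := by
      have he := aux_euler a hh
      simp only [hha, mul_zero, Finset.sum_const_zero] at he
      have hne : ((d : ℕ) : K) ≠ 0 := Nat.cast_ne_zero.mpr (by omega)
      exact (mul_eq_zero.mp he.symm).resolve_left hne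
    constructor
    · rw [hF]
      simp only [map_add, map_mul, heval_rename, eval_X, Fin.cons_zero]
      rw [aux_scale a t hg, aux_scale a t hh, hga0, hha0]
      ring
    · intro i
      induction i using Fin.cases with
      | zero =>
        rw [hD0, heval_rename, aux_scale a t hg, hga0, mul_zero]
      | succ j =>
        rw [hDs j]
        simp only [map_add, map_mul, heval_rename, eval_X, Fin.cons_zero]
        rw [aux_scale a t (aux_pderiv_hom hg j), aux_scale a t (aux_pderiv_hom hh j),
          hga j, hha j]
        ring
  · intro hs
    have key : ∀ s : K, ∀ j : Fin n,
        s * eval a (pderiv j g) + eval a (pderiv j h) = 0 := by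
      intro s j
      have := (hs s 1).2 (Fin.succ j)
      rw [hDs j] at this
      simp only [map_add, map_mul, heval_rename, eval_X, Fin.cons_zero] at this
      rw [aux_scale a 1 (aux_pderiv_hom hg j), aux_scale a 1 (aux_pderiv_hom hh j),
        one_pow, one_pow, one_mul, one_mul] at this
      exact this
    have hh' : ∀ j : Fin n, eval a (pderiv j h) = 0 := by
      intro j
      have := key 0 j
      simpa using this
    refine ⟨fun j => ?_, hh'⟩
    have := key 1 j
    rw [hh' j, one_mul, add_zero] at this
    exact this
end

section
/- Let F = x₀·f_{d-1} + f_d and a ∈ ℙⁿ⁻¹. If not all points of the line L_a are singular on Z(F), then L_a contains at most one singular point of Z(F) other than O = (1:0:⋯:0). -/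
open MvPolynomial

lemma aux_eval_smul {K : Type*} [CommSemiring K] {σ : Type*} {m : ℕ}
    {φ : MvPolynomial σ K} (hφ : φ.IsHomogeneous m) (c : K) (x : σ → K) :
    eval (fun i => c * x i) φ = c ^ m * eval x φ := by
  rw [eval_eq, eval_eq, Finset.mul_sum]
  refine Finset.sum_congr rfl fun d hd => ?_
  have hdeg : d.degree = m := by
    rw [Finsupp.degree_eq_weight_one]
    exact hφ (mem_support_iff.mp hd)
  calc (coeff d φ) * ∏ i ∈ d.support, (c * x i) ^ d i
      = coeff d φ * ((∏ i ∈ d.support, c ^ d i) * ∏ i ∈ d.support, x i ^ d i) := by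
        rw [← Finset.prod_mul_distrib]
        simp [mul_pow]
    _ = c ^ m * (coeff d φ * ∏ i ∈ d.support, x i ^ d i) := by
        rw [Finset.prod_pow_eq_pow_sum]
        rw [show ∑ i ∈ d.support, d i = m from hdeg]
        ring

lemma aux_degree_sub {σ : Type*} (d : σ →₀ ℕ) (i : σ) (h : d i ≠ 0) :
    (d - Finsupp.single i 1).degree + 1 = d.degree := by
  classical
  have hle : Finsupp.single i 1 ≤ d := by
    rw [Finsupp.single_le_iff]
    omega
  have hadd : (d - Finsupp.single i 1) + Finsupp.single i 1 = d :=
    tsub_add_cancel_of_le hle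
  have h1 : (Finsupp.single i 1 : σ →₀ ℕ).degree = 1 := by
    simp [Finsupp.degree_eq_weight_one, Finsupp.weight_apply, Finsupp.sum_single_index]
  calc (d - Finsupp.single i 1).degree + 1
      = (d - Finsupp.single i 1).degree + (Finsupp.single i 1 : σ →₀ ℕ).degree := by rw [h1]
    _ = d.degree := by
        simp only [Finsupp.degree_eq_weight_one]
        rw [← map_add, hadd]

lemma aux_pderiv_homog {K : Type*} [CommSemiring K] {σ : Type*} {m : ℕ}
    {φ : MvPolynomial σ K} (hφ : φ.IsHomogeneous m) (i : σ) :
    (pderiv i φ).IsHomogeneous (m - 1) := by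
  classical
  rw [show φ = ∑ d ∈ φ.support, monomial d (coeff d φ) from (support_sum_monomial_coeff φ).symm,
    map_sum]
  refine IsHomogeneous.sum _ _ _ fun d hd => ?_
  rw [pderiv_monomial]
  by_cases hi : d i = 0
  · simp only [hi, Nat.cast_zero, mul_zero, monomial_zero]
    exact isHomogeneous_zero _ _ _
  · apply isHomogeneous_monomial
    have hdeg : d.degree = m := by
      rw [Finsupp.degree_eq_weight_one]
      exact hφ (mem_support_iff.mp hd)
    have := aux_degree_sub d i hi
    omega

/-- if not every point of the line `L_a` is singular on `Z(F)`, then `L_a` carries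
at most one singular point besides `O`: any two singular points of `L_a` with `t ≠ 0` coincide
projectively. -/
theorem stmt3 {K : Type*} [Field K] [CharZero K] [IsAlgClosed K] {n d : ℕ} (hd : 3 ≤ d)
    (g h : MvPolynomial (Fin n) K)
    (hg : g.IsHomogeneous (d - 1)) (hh : h.IsHomogeneous d) (hg0 : g ≠ 0)
    (a : Fin n → K) (ha : a ≠ 0)
    (hnot : ¬ ∀ s t : K, SingularAt (X 0 * rename Fin.succ g + rename Fin.succ h)
      (Fin.cons s (fun j => t * a j))) :
    ∀ s₁ t₁ s₂ t₂ : K, t₁ ≠ 0 → t₂ ≠ 0 →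
      SingularAt (X 0 * rename Fin.succ g + rename Fin.succ h)
        (Fin.cons s₁ (fun j => t₁ * a j)) →
      SingularAt (X 0 * rename Fin.succ g + rename Fin.succ h)
        (Fin.cons s₂ (fun j => t₂ * a j)) →
      s₁ * t₂ = s₂ * t₁ := by
  obtain ⟨e, rfl⟩ : ∃ e, d = e + 3 := ⟨d - 3, by omega⟩
  set F : MvPolynomial (Fin (n + 1)) K := X 0 * rename Fin.succ g + rename Fin.succ h with hF
  have hgd : g.IsHomogeneous (e + 2) := by simpa using hg
  have hg' : ∀ i, (pderiv i g).IsHomogeneous (e + 1) := fun i => by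
    simpa using aux_pderiv_homog hgd i
  have hh' : ∀ i, (pderiv i h).IsHomogeneous (e + 2) := fun i => by
    simpa using aux_pderiv_homog hh i
  have hcomp : ∀ s t : K, (Fin.cons s (fun j => t * a j) : Fin (n + 1) → K) ∘ Fin.succ
      = fun j => t * a j := fun s t => funext fun j => Fin.cons_succ _ _ _
  have hinj : Function.Injective (Fin.succ : Fin n → Fin (n + 1)) := Fin.succ_injective n
  have hvars : ∀ (p : MvPolynomial (Fin n) K),
      pderiv (0 : Fin (n + 1)) (rename Fin.succ p) = 0 := by
    intro p
    apply pderiv_eq_zero_of_notMem_vars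
    intro hmem
    obtain ⟨j, -, hj⟩ := mem_vars_rename _ _ hmem
    exact Fin.succ_ne_zero j hj
  have hEval : ∀ s t : K, eval (Fin.cons s fun j => t * a j) F
      = s * (t ^ (e + 2) * eval a g) + t ^ (e + 3) * eval a h := by
    intro s t
    rw [hF]
    simp [eval_rename, hcomp, aux_eval_smul hgd, aux_eval_smul hh]
  have hD0 : ∀ s t : K, eval (Fin.cons s fun j => t * a j) (pderiv 0 F)
      = t ^ (e + 2) * eval a g := by
    intro s t
    rw [hF, map_add, pderiv_mul, hvars, hvars]
    simp [eval_rename, hcomp, aux_eval_smul hgd]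
  have hDi : ∀ (s t : K) (i : Fin n),
      eval (Fin.cons s fun j => t * a j) (pderiv i.succ F)
      = s * (t ^ (e + 1) * eval a (pderiv i g)) + t ^ (e + 2) * eval a (pderiv i h) := by
    intro s t i
    rw [hF, map_add, pderiv_mul, pderiv_rename hinj, pderiv_rename hinj,
      pderiv_X_of_ne (Fin.succ_ne_zero i).symm]
    simp [eval_rename, hcomp, aux_eval_smul (hg' i), aux_eval_smul (hh' i)]
  intro s₁ t₁ s₂ t₂ ht₁ ht₂ hS₁ hS₂
  by_contra hne
  apply hnot
  -- extract the basic equations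
  have hga : eval a g = 0 := by
    have h0 := hS₁.2 0
    rw [hD0] at h0
    exact (mul_eq_zero.mp h0).resolve_left (pow_ne_zero _ ht₁)
  have hha : eval a h = 0 := by
    have h0 := hS₁.1
    rw [hEval, hga] at h0
    simp only [mul_zero, zero_add] at h0
    exact (mul_eq_zero.mp h0).resolve_left (pow_ne_zero _ ht₁)
  have key : ∀ (s t : K), t ≠ 0 → SingularAt F (Fin.cons s fun j => t * a j) →
      ∀ i : Fin n, s * eval a (pderiv i g) + t * eval a (pderiv i h) = 0 := by
    intro s t ht hS i
    have h0 := hS.2 i.succ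
    rw [hDi] at h0
    have h1 : t ^ (e + 1) * (s * eval a (pderiv i g) + t * eval a (pderiv i h)) = 0 := by
      rw [← h0]; ring
    exact (mul_eq_zero.mp h1).resolve_left (pow_ne_zero _ ht)
  have hdet : s₁ * t₂ - s₂ * t₁ ≠ 0 := sub_ne_zero.mpr hne
  have hGi : ∀ i : Fin n, eval a (pderiv i g) = 0 := by
    intro i
    have e1 := key s₁ t₁ ht₁ hS₁ i
    have e2 := key s₂ t₂ ht₂ hS₂ i
    have : (s₁ * t₂ - s₂ * t₁) * eval a (pderiv i g) = 0 := by
      linear_combination t₂ * e1 - t₁ * e2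
    exact (mul_eq_zero.mp this).resolve_left hdet
  have hHi : ∀ i : Fin n, eval a (pderiv i h) = 0 := by
    intro i
    have e1 := key s₁ t₁ ht₁ hS₁ i
    have e2 := key s₂ t₂ ht₂ hS₂ i
    have : (s₁ * t₂ - s₂ * t₁) * eval a (pderiv i h) = 0 := by
      linear_combination s₁ * e2 - s₂ * e1
    exact (mul_eq_zero.mp this).resolve_left hdet
  intro s t
  constructor
  · rw [hEval, hga, hha]; ring
  · intro i
    refine Fin.cases ?_ ?_ i
    · rw [hD0, hga]; ring
    · intro j
      rw [hDi, hGi j, hHi j]; ring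
end

section
/- Let f₃ = x₁x₂x₃ + x₂³ + x₃³ and let θ(s,t) = (−s³−t³, s²t, st²) parameterize the nodal cubic Z(f₃) ⊂ ℙ². For a homogeneous quartic f₄ ∈ k[x₁,x₂,x₃], the polynomial f₄(θ(s,t)) (homogeneous of degree 12 in s,t) is identically zero if and only if f₃ divides f₄. -/
open MvPolynomial

namespace Stmt15Aux

noncomputable section

variable (K : Type*) [Field K]

/-- The exponent map `(a,b) ↦ (2a+b, a+2b)` corresponding to the substitution
`u ↦ s²t, v ↦ st²`. -/
def expMap : (Fin 2 →₀ ℕ) →+ (Fin 2 →₀ ℕ) where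
  toFun d := Finsupp.single 0 (2 * d 0 + d 1) + Finsupp.single 1 (d 0 + 2 * d 1)
  map_zero' := by simp
  map_add' d e := by
    have key : ∀ x y x' y' : ℕ,
        (Finsupp.single (0 : Fin 2) (x + x') + Finsupp.single (1 : Fin 2) (y + y'))
          = (Finsupp.single 0 x + Finsupp.single 1 y)
            + (Finsupp.single 0 x' + Finsupp.single 1 y') := by
      intros; rw [Finsupp.single_add, Finsupp.single_add]; abel
    simp only [Finsupp.add_apply]
    rw [show 2 * (d 0 + e 0) + (d 1 + e 1) = (2 * d 0 + d 1) + (2 * e 0 + e 1) by ring,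
      show d 0 + e 0 + 2 * (d 1 + e 1) = (d 0 + 2 * d 1) + (e 0 + 2 * e 1) by ring]
    exact key _ _ _ _

lemma expMap_apply (d : Fin 2 →₀ ℕ) :
    expMap d = Finsupp.single 0 (2 * d 0 + d 1) + Finsupp.single 1 (d 0 + 2 * d 1) := rfl

lemma expMap_injective : Function.Injective expMap := by
  intro d e h
  have h0 := DFunLike.congr_fun h 0
  have h1 := DFunLike.congr_fun h 1
  simp [expMap, Finsupp.single_apply] at h0 h1
  have hd0 : d 0 = e 0 ∧ d 1 = e 1 := by omega
  refine Finsupp.ext fun i => ?_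
  fin_cases i
  · exact hd0.1
  · exact hd0.2

lemma phi_eq : (aeval ![(X 0) ^ 2 * X 1, X 0 * (X 1) ^ 2] :
      MvPolynomial (Fin 2) K →ₐ[K] MvPolynomial (Fin 2) K)
    = AddMonoidAlgebra.mapDomainAlgHom K K expMap := by
  apply MvPolynomial.algHom_ext
  intro i
  rw [aeval_X]
  show _ = AddMonoidAlgebra.mapDomain expMap (X i : MvPolynomial (Fin 2) K)
  rw [show (X i : MvPolynomial (Fin 2) K) = AddMonoidAlgebra.single (Finsupp.single i 1) 1 by
    rw [MvPolynomial.single_eq_monomial]; rfl]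
  rw [AddMonoidAlgebra.mapDomain_single]
  rw [MvPolynomial.single_eq_monomial]
  fin_cases i
  · show (X 0 ^ 2 * X 1 : MvPolynomial (Fin 2) K)
        = monomial (expMap (Finsupp.single 0 1)) 1
    rw [show expMap (Finsupp.single (0 : Fin 2) 1)
        = Finsupp.single 0 2 + Finsupp.single 1 1 by
      rw [expMap_apply]; simp]
    rw [MvPolynomial.X_pow_eq_monomial,
      show (X 1 : MvPolynomial (Fin 2) K) = monomial (Finsupp.single 1 1) 1 from rfl,
      MvPolynomial.monomial_mul, mul_one]
  · show (X 0 * X 1 ^ 2 : MvPolynomial (Fin 2) K)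
        = monomial (expMap (Finsupp.single 1 1)) 1
    rw [show expMap (Finsupp.single (1 : Fin 2) 1)
        = Finsupp.single 0 1 + Finsupp.single 1 2 by
      rw [expMap_apply]; simp]
    rw [MvPolynomial.X_pow_eq_monomial,
      show (X 0 : MvPolynomial (Fin 2) K) = monomial (Finsupp.single 0 1) 1 from rfl,
      MvPolynomial.monomial_mul, mul_one]

lemma phi_injective :
    Function.Injective (aeval ![(X 0) ^ 2 * X 1, X 0 * (X 1) ^ 2] :
      MvPolynomial (Fin 2) K →ₐ[K] MvPolynomial (Fin 2) K) := by
  rw [phi_eq]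
  intro p q h
  have h' : AddMonoidAlgebra.mapDomain expMap p = AddMonoidAlgebra.mapDomain expMap q := h
  exact AddMonoidAlgebra.mapDomain_injective expMap_injective h'

lemma prime_X_fin1 : Prime (X 0 : MvPolynomial (Fin 1) K) := by
  have h := MulEquiv.prime_iff (finSuccEquiv K 0).toMulEquiv (p := (X 0 : MvPolynomial (Fin 1) K))
  rw [← h]
  have : (finSuccEquiv K 0).toMulEquiv (X 0 : MvPolynomial (Fin 1) K) = Polynomial.X :=
    finSuccEquiv_X_zero
  rw [this]
  exact Polynomial.prime_X

lemma prime_X0 : Prime (X 0 : MvPolynomial (Fin 2) K) := by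
  have h := MulEquiv.prime_iff (finSuccEquiv K 1).toMulEquiv (p := (X 0 : MvPolynomial (Fin 2) K))
  rw [← h]
  have : (finSuccEquiv K 1).toMulEquiv (X 0 : MvPolynomial (Fin 2) K) = Polynomial.X :=
    finSuccEquiv_X_zero
  rw [this]
  exact Polynomial.prime_X

lemma prime_X1 : Prime (X 1 : MvPolynomial (Fin 2) K) := by
  have h := MulEquiv.prime_iff (finSuccEquiv K 1).toMulEquiv (p := (X 1 : MvPolynomial (Fin 2) K))
  rw [← h]
  have h1 : (1 : Fin 2) = (0 : Fin 1).succ := rfl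
  have : (finSuccEquiv K 1).toMulEquiv (X 1 : MvPolynomial (Fin 2) K)
      = Polynomial.C (X 0 : MvPolynomial (Fin 1) K) := by
    rw [h1]; exact finSuccEquiv_X_succ
  rw [this, Polynomial.prime_C_iff]
  exact prime_X_fin1 K

lemma not_X0_dvd_X1 : ¬ (X 0 : MvPolynomial (Fin 2) K) ∣ X 1 := by
  rintro ⟨c, hc⟩
  have := congrArg (eval ![(0 : K), 1]) hc
  simp at this

/-- The key coprimality fact: a common divisor of `x₂x₃` and `x₂³+x₃³` is a unit. -/
lemma common_divisor_isUnit (r : MvPolynomial (Fin 2) K)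
    (h1 : r ∣ X 0 * X 1) (h2 : r ∣ X 0 ^ 3 + X 1 ^ 3) : IsUnit r := by
  by_contra hu
  have hr0 : r ≠ 0 := by
    rintro rfl
    exact mul_ne_zero (MvPolynomial.X_ne_zero _) (MvPolynomial.X_ne_zero _)
      (zero_dvd_iff.mp h1)
  obtain ⟨p, hpirr, hpr⟩ := WfDvdMonoid.exists_irreducible_factor hu hr0
  have hp : Prime p := UniqueFactorizationMonoid.irreducible_iff_prime.mp hpirr
  have hpd : p ∣ X 0 ∧ p ∣ X 1 := by
    rcases hp.2.2 _ _ (hpr.trans h1) with h | h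
    · refine ⟨h, hp.dvd_of_dvd_pow (n := 3) ?_⟩
      have : p ∣ (X 0 ^ 3 + X 1 ^ 3) - X 0 ^ 3 :=
        dvd_sub (hpr.trans h2) (dvd_pow h (by norm_num))
      simpa using this
    · refine ⟨hp.dvd_of_dvd_pow (n := 3) ?_, h⟩
      have : p ∣ (X 0 ^ 3 + X 1 ^ 3) - X 1 ^ 3 :=
        dvd_sub (hpr.trans h2) (dvd_pow h (by norm_num))
      simpa using this
  have hassoc : Associated p (X 0 : MvPolynomial (Fin 2) K) :=
    hpirr.associated_of_dvd (prime_X0 K).irreducible hpd.1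
  exact not_X0_dvd_X1 K ((hassoc.symm.dvd).trans hpd.2)

end

end Stmt15Aux

open Stmt15Aux in
set_option maxHeartbeats 1000000 in
/-- with `f₃ = x₁x₂x₃ + x₂³ + x₃³` and the parameterization
`θ(s,t) = (−s³−t³, s²t, st²)` of the nodal cubic, a homogeneous quartic `f₄` satisfies
`f₄(θ) ≡ 0` iff `f₃` divides `f₄`. -/
theorem stmt15 {K : Type*} [Field K] [CharZero K]
    (f₄ : MvPolynomial (Fin 3) K) (hf₄ : f₄.IsHomogeneous 4) :
    aeval (![-(X 0 ^ 3) - X 1 ^ 3, X 0 ^ 2 * X 1, X 0 * X 1 ^ 2] :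
        Fin 3 → MvPolynomial (Fin 2) K) f₄ = 0 ↔
      (X 0 * X 1 * X 2 + X 1 ^ 3 + X 2 ^ 3 : MvPolynomial (Fin 3) K) ∣ f₄ := by
  classical
  set θ : Fin 3 → MvPolynomial (Fin 2) K :=
    ![-(X 0 ^ 3) - X 1 ^ 3, X 0 ^ 2 * X 1, X 0 * X 1 ^ 2] with hθdef
  set f₃ : MvPolynomial (Fin 3) K := X 0 * X 1 * X 2 + X 1 ^ 3 + X 2 ^ 3 with hf₃def
  have hθ0 : θ 0 = -(X 0 ^ 3) - X 1 ^ 3 := rfl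
  have hθ1 : θ 1 = X 0 ^ 2 * X 1 := rfl
  have hθ2 : θ 2 = X 0 * X 1 ^ 2 := rfl
  have haevalf₃ : aeval θ f₃ = 0 := by
    rw [hf₃def]
    simp only [map_add, map_mul, map_pow, MvPolynomial.aeval_X, hθ0, hθ1, hθ2]
    ring
  constructor
  · -- hard direction
    intro h
    set u : MvPolynomial (Fin 2) K := X 0 with hu
    set w : MvPolynomial (Fin 2) K := X 1 with hw
    set φr : MvPolynomial (Fin 2) K →+* MvPolynomial (Fin 2) K :=
      ((aeval ![(X 0) ^ 2 * X 1, X 0 * (X 1) ^ 2] :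
        MvPolynomial (Fin 2) K →ₐ[K] MvPolynomial (Fin 2) K) :
        MvPolynomial (Fin 2) K →+* MvPolynomial (Fin 2) K) with hφr
    have hφru : φr u = u ^ 2 * w := by
      rw [hφr, hu, hw]
      rw [RingHom.coe_coe, MvPolynomial.aeval_X]
      rfl
    have hφrw : φr w = u * w ^ 2 := by
      rw [hφr, hu, hw]
      rw [RingHom.coe_coe, MvPolynomial.aeval_X]
      rfl
    set y : MvPolynomial (Fin 2) K := -(u ^ 3) - w ^ 3 with hy
    set e := MvPolynomial.finSuccEquiv K 2 with he
    -- decomposition of aeval θ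
    have key : ∀ f : MvPolynomial (Fin 3) K,
        aeval θ f = Polynomial.eval₂ φr y (e f) := by
      have hhom : ((aeval θ : MvPolynomial (Fin 3) K →ₐ[K] MvPolynomial (Fin 2) K) :
            MvPolynomial (Fin 3) K →+* MvPolynomial (Fin 2) K)
          = (Polynomial.eval₂RingHom φr y).comp
              ((e : MvPolynomial (Fin 3) K ≃+* Polynomial (MvPolynomial (Fin 2) K)) :
                MvPolynomial (Fin 3) K →+* Polynomial (MvPolynomial (Fin 2) K)) := by
        apply MvPolynomial.ringHom_ext
        · intro a
          simp only [RingHom.coe_coe, MvPolynomial.aeval_C, RingHom.coe_comp,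
            Function.comp_apply, RingEquiv.coe_toRingHom]
          have h1 : (e (C a) : Polynomial (MvPolynomial (Fin 2) K)) = Polynomial.C (C a) := by
            simp [he, MvPolynomial.finSuccEquiv_apply]
          rw [show ((e : MvPolynomial (Fin 3) K ≃+* Polynomial (MvPolynomial (Fin 2) K)) (C a))
            = e (C a) from rfl, h1]
          rw [Polynomial.coe_eval₂RingHom, Polynomial.eval₂_C]
          rw [hφr, RingHom.coe_coe, MvPolynomial.aeval_C]
        · intro i
          simp only [RingHom.coe_coe, MvPolynomial.aeval_X, RingHom.coe_comp,
            Function.comp_apply, RingEquiv.coe_toRingHom]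
          refine Fin.cases ?_ (fun j => ?_) i
          · rw [show ((e : MvPolynomial (Fin 3) K ≃+* Polynomial (MvPolynomial (Fin 2) K)) (X 0))
              = e (X 0) from rfl, he, MvPolynomial.finSuccEquiv_X_zero]
            rw [Polynomial.coe_eval₂RingHom, Polynomial.eval₂_X]
            exact hθ0.trans (by rw [hy, hu, hw])
          · rw [show ((e : MvPolynomial (Fin 3) K ≃+* Polynomial (MvPolynomial (Fin 2) K)) (X j.succ))
              = e (X j.succ) from rfl, he, MvPolynomial.finSuccEquiv_X_succ]
            rw [Polynomial.coe_eval₂RingHom, Polynomial.eval₂_C]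
            fin_cases j
            · exact hφru.symm
            · exact hφrw.symm
      intro f
      have := DFunLike.congr_fun hhom f
      simpa using this
    -- image of f₃ under e
    have hef₃ : e f₃ = Polynomial.C (u * w) * Polynomial.X + Polynomial.C (u ^ 3 + w ^ 3) := by
      have h1 : (1 : Fin 3) = (0 : Fin 2).succ := rfl
      have h2 : (2 : Fin 3) = (1 : Fin 2).succ := rfl
      rw [hf₃def]
      simp only [map_add, map_mul, map_pow, he]
      rw [MvPolynomial.finSuccEquiv_X_zero, h1, h2, MvPolynomial.finSuccEquiv_X_succ,
        MvPolynomial.finSuccEquiv_X_succ]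
      rw [mul_assoc, ← Polynomial.C_mul, ← Polynomial.C_pow, ← Polynomial.C_pow]
      ring
    -- move to the fraction field
    set i : MvPolynomial (Fin 2) K →+* FractionRing (MvPolynomial (Fin 2) K) :=
      algebraMap (MvPolynomial (Fin 2) K) (FractionRing (MvPolynomial (Fin 2) K)) with hi
    have hiinj : Function.Injective i :=
      IsFractionRing.injective (MvPolynomial (Fin 2) K) (FractionRing (MvPolynomial (Fin 2) K))
    have hφinj : Function.Injective φr := fun a b hab => phi_injective K hab
    set φ' : MvPolynomial (Fin 2) K →+* FractionRing (MvPolynomial (Fin 2) K) :=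
      i.comp φr with hφ'
    have hφ'inj : Function.Injective φ' := hiinj.comp hφinj
    set Φ : FractionRing (MvPolynomial (Fin 2) K) →+* FractionRing (MvPolynomial (Fin 2) K) :=
      IsFractionRing.lift hφ'inj with hΦ
    have hΦalg : ∀ x : MvPolynomial (Fin 2) K, Φ (i x) = φ' x := fun x =>
      IsFractionRing.lift_algebraMap hφ'inj x
    have huw : (u * w : MvPolynomial (Fin 2) K) ≠ 0 :=
      mul_ne_zero (MvPolynomial.X_ne_zero _) (MvPolynomial.X_ne_zero _)
    have huw0 : i (u * w) ≠ 0 := fun hc => huw (hiinj (by simpa using hc))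
    set α : FractionRing (MvPolynomial (Fin 2) K) := -(i (u ^ 3 + w ^ 3)) / i (u * w) with hα
    have hΦα : Φ α = i y := by
      have hφ'uw : φ' (u * w) ≠ 0 := fun hc => huw (hφ'inj (by simpa using hc))
      rw [hα, map_div₀, map_neg, hΦalg, hΦalg]
      rw [div_eq_iff hφ'uw]
      have hR : -(φr (u ^ 3 + w ^ 3)) = y * φr (u * w) := by
        rw [map_add, map_pow, map_pow, map_mul, hφru, hφrw, hy]
        ring
      calc -(φ' (u ^ 3 + w ^ 3)) = i (-(φr (u ^ 3 + w ^ 3))) := by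
            rw [hφ', RingHom.comp_apply, map_neg]
        _ = i (y * φr (u * w)) := by rw [hR]
        _ = i y * φ' (u * w) := by rw [map_mul, hφ', RingHom.comp_apply]
    -- P := e f₄ has root α over the fraction field
    set P : Polynomial (MvPolynomial (Fin 2) K) := e f₄ with hP
    have heval : Polynomial.eval₂ φr y P = 0 := by rw [hP, ← key, h]
    have hroot : Polynomial.eval₂ i α P = 0 := by
      have hΦinj : Function.Injective Φ := Φ.injective
      apply hΦinj
      rw [map_zero]
      rw [Polynomial.hom_eval₂ P i Φ α, hΦα]
      have hcomp : Φ.comp i = i.comp φr := by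
        refine RingHom.ext fun x => ?_
        rw [RingHom.comp_apply, hΦalg x, hφ']
      rw [hcomp]
      rw [← Polynomial.hom_eval₂ P φr i y, heval, map_zero]
    have hroot' : (P.map i).IsRoot α := by
      rw [Polynomial.IsRoot, ← Polynomial.eval₂_eq_eval_map]
      exact hroot
    have hdvd1 : (Polynomial.X - Polynomial.C α) ∣ P.map i :=
      (Polynomial.dvd_iff_isRoot).mpr hroot'
    -- the image of e f₃ over the fraction field factors through X - C α
    have hmapf₃ : (e f₃).map i
        = Polynomial.C (i (u * w)) * (Polynomial.X - Polynomial.C α) := by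
      rw [hef₃, Polynomial.map_add, Polynomial.map_mul, Polynomial.map_C, Polynomial.map_X,
        Polynomial.map_C]
      rw [mul_sub, ← Polynomial.C_mul]
      have hval : i (u * w) * α = -(i (u ^ 3 + w ^ 3)) := by
        rw [hα, mul_comm, div_mul_cancel₀ _ huw0]
      rw [hval, Polynomial.C_neg, sub_neg_eq_add]
    have hdvd2 : (e f₃).map i ∣ P.map i := by
      rcases hdvd1 with ⟨G, hG⟩
      refine ⟨Polynomial.C (i (u * w))⁻¹ * G, ?_⟩
      have hCunit : Polynomial.C (i (u * w)) * Polynomial.C (i (u * w))⁻¹ = 1 := by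
        rw [← Polynomial.C_mul, mul_inv_cancel₀ huw0, Polynomial.C_1]
      calc P.map i = (Polynomial.X - Polynomial.C α) * G := hG
        _ = (Polynomial.C (i (u * w)) * Polynomial.C (i (u * w))⁻¹)
              * ((Polynomial.X - Polynomial.C α) * G) := by rw [hCunit, one_mul]
        _ = (Polynomial.C (i (u * w)) * (Polynomial.X - Polynomial.C α))
              * (Polynomial.C (i (u * w))⁻¹ * G) := by ring
        _ = (e f₃).map i * (Polynomial.C (i (u * w))⁻¹ * G) := by rw [hmapf₃]
    -- primitivity of e f₃
    have hprim : (e f₃).IsPrimitive := by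
      intro r hr
      rw [Polynomial.C_dvd_iff_dvd_coeff] at hr
      have hc1 := hr 1
      have hc0 := hr 0
      rw [hef₃] at hc1 hc0
      simp only [Polynomial.coeff_add, Polynomial.coeff_C_mul, Polynomial.coeff_X_one,
        Polynomial.coeff_C, Polynomial.coeff_X_zero, mul_one, mul_zero] at hc1 hc0
      norm_num at hc1 hc0
      exact common_divisor_isUnit K r (hu ▸ hw ▸ hc1) (hu ▸ hw ▸ hc0)
    -- descend the divisibility using Gauss's lemma
    letI : NormalizedGCDMonoid (MvPolynomial (Fin 2) K) := Classical.arbitrary _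
    by_cases hP0 : P = 0
    · have hf0 : f₄ = 0 := by
        have h' := congrArg e.symm hP0
        rw [hP] at h'
        simpa using h'
      rw [hf0]
      exact dvd_zero _
    · have hcont : P.content ≠ 0 := fun hc => hP0 (Polynomial.content_eq_zero_iff.mp hc)
      have hic : i P.content ≠ 0 := fun hc => hcont (hiinj (by simpa using hc))
      have hdvd3 : (e f₃).map i ∣ (P.primPart).map i := by
        have hPfact : P.map i = Polynomial.C (i P.content) * (P.primPart).map i := by
          conv_lhs => rw [P.eq_C_content_mul_primPart]
          rw [Polynomial.map_mul, Polynomial.map_C]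
        rcases hdvd2 with ⟨G, hG⟩
        rw [hPfact] at hG
        refine ⟨Polynomial.C (i P.content)⁻¹ * G, ?_⟩
        have hcancel : Polynomial.C (i P.content)⁻¹
            * (Polynomial.C (i P.content) * (P.primPart).map i) = (P.primPart).map i := by
          rw [← mul_assoc, ← Polynomial.C_mul, inv_mul_cancel₀ hic, Polynomial.C_1, one_mul]
        calc (P.primPart).map i
            = Polynomial.C (i P.content)⁻¹ * (Polynomial.C (i P.content) * (P.primPart).map i) :=
              hcancel.symm
          _ = Polynomial.C (i P.content)⁻¹ * ((e f₃).map i * G) := by rw [← hG]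
          _ = (e f₃).map i * (Polynomial.C (i P.content)⁻¹ * G) := by ring
      have hdvd4 : e f₃ ∣ P.primPart :=
        hprim.dvd_of_fraction_map_dvd_fraction_map hdvd3
      have hdvd5 : e f₃ ∣ P := hdvd4.trans P.primPart_dvd
      have hfin := map_dvd e.symm hdvd5
      rw [hP] at hfin
      simpa using hfin
  · rintro ⟨g, rfl⟩
    rw [map_mul, haevalf₃, zero_mul]
end

section
/- With f₃ = x₁x₂x₃ + x₂³ + x₃³ and θ(s,t) = (−s³−t³, s²t, st²), the image of the linear map sending a homogeneous quartic f₄ ∈ k[x₁,x₂,x₃]₄ (a 15-dimensional space) to f₄(θ) ∈ k[s,t]₁₂ is exactly the set of degree-12 forms b₀s¹² + b₁s¹¹t + ⋯ + b₁₂t¹² with b₀ = b₁₂, and the kernel is {ℓ·f₃ : ℓ a linear form}. -/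
set_option maxHeartbeats 2000000
set_option maxRecDepth 4000
open MvPolynomial Finsupp

section Aux
variable {K : Type*} [CommRing K]

noncomputable def vm (m : ℕ) : Fin 2 →₀ ℕ := single 0 (12 - m) + single 1 m
noncomputable def w3 (a b c : ℕ) : Fin 3 →₀ ℕ := single 0 a + single 1 b + single 2 c

lemma vm_inj {m n : ℕ} : vm m = vm n ↔ m = n := by
  constructor
  · intro h
    simpa [vm, Finsupp.single_apply] using DFunLike.congr_fun h 1
  · rintro rfl; rfl

lemma w3_inj {a b c a' b' c' : ℕ} : w3 a b c = w3 a' b' c' ↔ a = a' ∧ b = b' ∧ c = c' := by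
  constructor
  · intro h
    refine ⟨?_, ?_, ?_⟩
    · simpa [w3, Finsupp.single_apply] using DFunLike.congr_fun h 0
    · simpa [w3, Finsupp.single_apply] using DFunLike.congr_fun h 1
    · simpa [w3, Finsupp.single_apply] using DFunLike.congr_fun h 2
  · rintro ⟨rfl, rfl, rfl⟩; rfl

lemma deg2 (d : Fin 2 →₀ ℕ) : d.degree = d 0 + d 1 := by
  rw [Finsupp.degree_apply, Finset.sum_subset (Finset.subset_univ _)]
  · simp [Fin.sum_univ_two]
  · intro x _ hx; simpa using hx

lemma deg3 (d : Fin 3 →₀ ℕ) : d.degree = d 0 + d 1 + d 2 := by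
  rw [Finsupp.degree_apply, Finset.sum_subset (Finset.subset_univ _)]
  · simp [Fin.sum_univ_three]
  · intro x _ hx; simpa using hx

lemma fin2_eq (d : Fin 2 →₀ ℕ) : d = single 0 (d 0) + single 1 (d 1) := by
  ext a; fin_cases a <;> simp [Finsupp.single_apply]

lemma fin3_eq (d : Fin 3 →₀ ℕ) : d = single 0 (d 0) + single 1 (d 1) + single 2 (d 2) := by
  ext a; fin_cases a <;> simp [Finsupp.single_apply]

lemma vm_apply (m : ℕ) : (vm m) 0 = 12 - m ∧ (vm m) 1 = m := by
  constructor <;> simp [vm, Finsupp.single_apply]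

lemma w3_apply (a b c : ℕ) : (w3 a b c) 0 = a ∧ (w3 a b c) 1 = b ∧ (w3 a b c) 2 = c := by
  refine ⟨?_, ?_, ?_⟩ <;> simp [w3, Finsupp.single_apply]

lemma w3_deg (a b c : ℕ) : (w3 a b c).degree = a + b + c := by
  rw [deg3, (w3_apply a b c).1, (w3_apply a b c).2.1, (w3_apply a b c).2.2]

lemma mono2 (a b : ℕ) (r : K) :
    (monomial (single 0 a + single 1 b) r : MvPolynomial (Fin 2) K) = C r * X 0 ^ a * X 1 ^ b := by
  rw [X_pow_eq_monomial, X_pow_eq_monomial, C_apply, monomial_mul, monomial_mul]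
  simp

lemma mono2' (m : ℕ) (r : K) :
    (monomial (vm m) r : MvPolynomial (Fin 2) K) = C r * X 0 ^ (12 - m) * X 1 ^ m := mono2 _ _ r

lemma mono3 (a b c : ℕ) (r : K) :
    (monomial (w3 a b c) r : MvPolynomial (Fin 3) K) = C r * X 0 ^ a * X 1 ^ b * X 2 ^ c := by
  rw [X_pow_eq_monomial, X_pow_eq_monomial, X_pow_eq_monomial, C_apply,
    monomial_mul, monomial_mul, monomial_mul, w3]
  simp [add_assoc]

lemma decomp2 (q : MvPolynomial (Fin 2) K) (hq : q.IsHomogeneous 12) :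
    q = monomial (vm 0) (coeff (vm 0) q) +
      monomial (vm 1) (coeff (vm 1) q) +
      monomial (vm 2) (coeff (vm 2) q) +
      monomial (vm 3) (coeff (vm 3) q) +
      monomial (vm 4) (coeff (vm 4) q) +
      monomial (vm 5) (coeff (vm 5) q) +
      monomial (vm 6) (coeff (vm 6) q) +
      monomial (vm 7) (coeff (vm 7) q) +
      monomial (vm 8) (coeff (vm 8) q) +
      monomial (vm 9) (coeff (vm 9) q) +
      monomial (vm 10) (coeff (vm 10) q) +
      monomial (vm 11) (coeff (vm 11) q) +
      monomial (vm 12) (coeff (vm 12) q) := by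
  have key : ∀ m : ℕ, m ≤ 12 → coeff (vm m) q =
      coeff (vm m) (monomial (vm 0) (coeff (vm 0) q) +
      monomial (vm 1) (coeff (vm 1) q) +
      monomial (vm 2) (coeff (vm 2) q) +
      monomial (vm 3) (coeff (vm 3) q) +
      monomial (vm 4) (coeff (vm 4) q) +
      monomial (vm 5) (coeff (vm 5) q) +
      monomial (vm 6) (coeff (vm 6) q) +
      monomial (vm 7) (coeff (vm 7) q) +
      monomial (vm 8) (coeff (vm 8) q) +
      monomial (vm 9) (coeff (vm 9) q) +
      monomial (vm 10) (coeff (vm 10) q) +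
      monomial (vm 11) (coeff (vm 11) q) +
      monomial (vm 12) (coeff (vm 12) q)) := by
    intro m hm
    interval_cases m <;> simp [coeff_monomial, vm_inj]
  ext d
  by_cases hd : d 0 + d 1 = 12
  · have hdv : d = vm (d 1) := by
      have h12 : d 0 = 12 - d 1 := by omega
      rw [vm, ← h12]
      exact fin2_eq d
    rw [hdv]
    exact key (d 1) (by omega)
  · have hne : ∀ m : ℕ, m ≤ 12 → vm m ≠ d := by
      intro m hm h
      apply hd
      rw [← h, (vm_apply m).1, (vm_apply m).2]
      omega
    rw [hq.coeff_eq_zero (by rw [deg2]; omega)]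
    simp [coeff_monomial, hne 0 (by norm_num), hne 1 (by norm_num), hne 2 (by norm_num), hne 3 (by norm_num), hne 4 (by norm_num), hne 5 (by norm_num), hne 6 (by norm_num), hne 7 (by norm_num), hne 8 (by norm_num), hne 9 (by norm_num), hne 10 (by norm_num), hne 11 (by norm_num), hne 12 (by norm_num)]

lemma decomp3 (f : MvPolynomial (Fin 3) K) (hf : f.IsHomogeneous 4) :
    f = monomial (w3 4 0 0) (coeff (w3 4 0 0) f) +
      monomial (w3 3 1 0) (coeff (w3 3 1 0) f) +
      monomial (w3 3 0 1) (coeff (w3 3 0 1) f) +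
      monomial (w3 2 2 0) (coeff (w3 2 2 0) f) +
      monomial (w3 2 1 1) (coeff (w3 2 1 1) f) +
      monomial (w3 2 0 2) (coeff (w3 2 0 2) f) +
      monomial (w3 1 3 0) (coeff (w3 1 3 0) f) +
      monomial (w3 1 2 1) (coeff (w3 1 2 1) f) +
      monomial (w3 1 1 2) (coeff (w3 1 1 2) f) +
      monomial (w3 1 0 3) (coeff (w3 1 0 3) f) +
      monomial (w3 0 4 0) (coeff (w3 0 4 0) f) +
      monomial (w3 0 3 1) (coeff (w3 0 3 1) f) +
      monomial (w3 0 2 2) (coeff (w3 0 2 2) f) +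
      monomial (w3 0 1 3) (coeff (w3 0 1 3) f) +
      monomial (w3 0 0 4) (coeff (w3 0 0 4) f) := by
  have key : ∀ a b c : ℕ, a + b + c = 4 → coeff (w3 a b c) f =
      coeff (w3 a b c) (monomial (w3 4 0 0) (coeff (w3 4 0 0) f) +
      monomial (w3 3 1 0) (coeff (w3 3 1 0) f) +
      monomial (w3 3 0 1) (coeff (w3 3 0 1) f) +
      monomial (w3 2 2 0) (coeff (w3 2 2 0) f) +
      monomial (w3 2 1 1) (coeff (w3 2 1 1) f) +
      monomial (w3 2 0 2) (coeff (w3 2 0 2) f) +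
      monomial (w3 1 3 0) (coeff (w3 1 3 0) f) +
      monomial (w3 1 2 1) (coeff (w3 1 2 1) f) +
      monomial (w3 1 1 2) (coeff (w3 1 1 2) f) +
      monomial (w3 1 0 3) (coeff (w3 1 0 3) f) +
      monomial (w3 0 4 0) (coeff (w3 0 4 0) f) +
      monomial (w3 0 3 1) (coeff (w3 0 3 1) f) +
      monomial (w3 0 2 2) (coeff (w3 0 2 2) f) +
      monomial (w3 0 1 3) (coeff (w3 0 1 3) f) +
      monomial (w3 0 0 4) (coeff (w3 0 0 4) f)) := by
    intro a b c habc
    have ha : a ≤ 4 := by omega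
    have hb : b ≤ 4 := by omega
    have hc : c ≤ 4 := by omega
    interval_cases a <;> interval_cases b <;> interval_cases c <;> first | omega |
      simp [coeff_monomial, w3_inj]
  ext d
  by_cases hd : d 0 + d 1 + d 2 = 4
  · have hdv : d = w3 (d 0) (d 1) (d 2) := fin3_eq d
    rw [hdv]
    exact key (d 0) (d 1) (d 2) (by omega)
  · have hne : ∀ a b c : ℕ, a + b + c = 4 → w3 a b c ≠ d := by
      intro a b c habc h
      apply hd
      rw [← h, (w3_apply a b c).1, (w3_apply a b c).2.1, (w3_apply a b c).2.2]
      omega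
    rw [hf.coeff_eq_zero (by rw [deg3]; omega)]
    simp [coeff_monomial, hne 4 0 0 (by norm_num), hne 3 1 0 (by norm_num), hne 3 0 1 (by norm_num), hne 2 2 0 (by norm_num), hne 2 1 1 (by norm_num), hne 2 0 2 (by norm_num), hne 1 3 0 (by norm_num), hne 1 2 1 (by norm_num), hne 1 1 2 (by norm_num), hne 1 0 3 (by norm_num), hne 0 4 0 (by norm_num), hne 0 3 1 (by norm_num), hne 0 2 2 (by norm_num), hne 0 1 3 (by norm_num), hne 0 0 4 (by norm_num)]


lemma can (f : MvPolynomial (Fin 3) K) (hf : f.IsHomogeneous 4) :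
    aeval (![-(X 0 ^ 3) - X 1 ^ 3, X 0 ^ 2 * X 1, X 0 * X 1 ^ 2] :
        Fin 3 → MvPolynomial (Fin 2) K) f =
      monomial (vm 0) ((coeff (w3 4 0 0) f)) +
      monomial (vm 1) (-(coeff (w3 3 1 0) f)) +
      monomial (vm 2) ((coeff (w3 2 2 0) f) - (coeff (w3 3 0 1) f)) +
      monomial (vm 3) (4*(coeff (w3 4 0 0) f) + (coeff (w3 2 1 1) f) - (coeff (w3 1 3 0) f)) +
      monomial (vm 4) ((coeff (w3 0 4 0) f) - (coeff (w3 1 2 1) f) + (coeff (w3 2 0 2) f) - 3*(coeff (w3 3 1 0) f)) +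
      monomial (vm 5) ((coeff (w3 0 3 1) f) - (coeff (w3 1 1 2) f) + 2*(coeff (w3 2 2 0) f) - 3*(coeff (w3 3 0 1) f)) +
      monomial (vm 6) ((coeff (w3 0 2 2) f) - (coeff (w3 1 0 3) f) - (coeff (w3 1 3 0) f) + 2*(coeff (w3 2 1 1) f) + 6*(coeff (w3 4 0 0) f)) +
      monomial (vm 7) ((coeff (w3 0 1 3) f) - (coeff (w3 1 2 1) f) + 2*(coeff (w3 2 0 2) f) - 3*(coeff (w3 3 1 0) f)) +
      monomial (vm 8) ((coeff (w3 0 0 4) f) - (coeff (w3 1 1 2) f) + (coeff (w3 2 2 0) f) - 3*(coeff (w3 3 0 1) f)) +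
      monomial (vm 9) ((coeff (w3 2 1 1) f) - (coeff (w3 1 0 3) f) + 4*(coeff (w3 4 0 0) f)) +
      monomial (vm 10) ((coeff (w3 2 0 2) f) - (coeff (w3 3 1 0) f)) +
      monomial (vm 11) (-(coeff (w3 3 0 1) f)) +
      monomial (vm 12) ((coeff (w3 4 0 0) f)) := by
  conv_lhs => rw [decomp3 f hf]
  simp only [mono3, mono2', map_add, map_sub, map_neg, map_mul, map_pow, map_ofNat, aeval_X,
    aeval_C, algebraMap_eq, Matrix.cons_val_zero, Matrix.cons_val_one, Matrix.head_cons,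
    Matrix.cons_val_two, Matrix.tail_cons]
  norm_num
  ring


lemma vm0 : (Finsupp.single 0 12 : Fin 2 →₀ ℕ) = vm 0 := by simp [vm]
lemma vm12 : (Finsupp.single 1 12 : Fin 2 →₀ ℕ) = vm 12 := by simp [vm]

lemma f3_image {K : Type*} [CommRing K] :
    aeval (![-(X 0 ^ 3) - X 1 ^ 3, X 0 ^ 2 * X 1, X 0 * X 1 ^ 2] :
        Fin 3 → MvPolynomial (Fin 2) K) ((X 0 * X 1 * X 2 + X 1 ^ 3 + X 2 ^ 3 : MvPolynomial (Fin 3) K)) = 0 := by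
  simp only [map_add, map_mul, map_pow, aeval_X, Matrix.cons_val_zero, Matrix.cons_val_one,
    Matrix.head_cons, Matrix.cons_val_two, Matrix.tail_cons]
  ring

end Aux

/-- for the nodal cubic `f₃ = x₁x₂x₃ + x₂³ + x₃³` parameterized by
`θ(s,t) = (−s³−t³, s²t, st²)`, the image of the linear map `f₄ ↦ f₄(θ)` from homogeneous
quartics to binary forms of degree 12 consists exactly of the forms whose coefficients of
`s¹²` and `t¹²` agree, and its kernel is the set of products `ℓ·f₃` with `ℓ` linear. -/
theorem stmt16 {K : Type*} [Field K] [CharZero K] :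
    (∀ q : MvPolynomial (Fin 2) K, q.IsHomogeneous 12 →
      ((∃ f₄ : MvPolynomial (Fin 3) K, f₄.IsHomogeneous 4 ∧
          aeval (![-(X 0 ^ 3) - X 1 ^ 3, X 0 ^ 2 * X 1, X 0 * X 1 ^ 2] :
            Fin 3 → MvPolynomial (Fin 2) K) f₄ = q) ↔
        coeff (Finsupp.single 0 12) q = coeff (Finsupp.single 1 12) q)) ∧
    (∀ f₄ : MvPolynomial (Fin 3) K, f₄.IsHomogeneous 4 →
      (aeval (![-(X 0 ^ 3) - X 1 ^ 3, X 0 ^ 2 * X 1, X 0 * X 1 ^ 2] :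
          Fin 3 → MvPolynomial (Fin 2) K) f₄ = 0 ↔
        ∃ ℓ : MvPolynomial (Fin 3) K, ℓ.IsHomogeneous 1 ∧
          f₄ = ℓ * (X 0 * X 1 * X 2 + X 1 ^ 3 + X 2 ^ 3))) := by
  constructor
  · intro q hq
    constructor
    · rintro ⟨f₄, hf₄, heq⟩
      have hcan := can f₄ hf₄
      rw [heq] at hcan
      have h0 := congrArg (coeff (vm 0)) hcan
      have h12 := congrArg (coeff (vm 12)) hcan
      simp only [coeff_add, coeff_monomial, vm_inj, coeff_zero] at h0 h12
      norm_num at h0 h12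
      rw [vm0, vm12, h0, h12]
    · intro hb
      rw [vm0, vm12] at hb
      refine ⟨monomial (w3 4 0 0) (coeff (vm 0) q) +
        monomial (w3 3 1 0) (-(coeff (vm 1) q)) +
        monomial (w3 3 0 1) (-(coeff (vm 11) q)) +
        monomial (w3 2 2 0) (coeff (vm 2) q - coeff (vm 11) q) +
        monomial (w3 2 0 2) (coeff (vm 10) q - coeff (vm 1) q) +
        monomial (w3 1 3 0) (4 * coeff (vm 0) q - coeff (vm 3) q) +
        monomial (w3 1 0 3) (4 * coeff (vm 0) q - coeff (vm 9) q) +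
        monomial (w3 0 4 0) (coeff (vm 4) q - 2 * coeff (vm 1) q - coeff (vm 10) q) +
        monomial (w3 0 3 1) (coeff (vm 5) q - 2 * coeff (vm 2) q - coeff (vm 11) q) +
        monomial (w3 0 2 2) (2 * coeff (vm 0) q - coeff (vm 3) q + coeff (vm 6) q - coeff (vm 9) q) +
        monomial (w3 0 1 3) (coeff (vm 7) q - coeff (vm 1) q - 2 * coeff (vm 10) q) +
        monomial (w3 0 0 4) (coeff (vm 8) q - coeff (vm 2) q - 2 * coeff (vm 11) q),
        ?_, ?_⟩
      · repeat' first
          | exact isHomogeneous_monomial _ (by simp [w3_deg])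
          | apply MvPolynomial.IsHomogeneous.add
      · conv_rhs => rw [decomp2 q hq]
        rw [← hb]
        simp only [mono2', mono3, map_add, map_sub, map_neg, map_mul, map_pow, map_ofNat, aeval_X,
      aeval_C, algebraMap_eq, Matrix.cons_val_zero, Matrix.cons_val_one, Matrix.head_cons,
      Matrix.cons_val_two, Matrix.tail_cons]
        norm_num
        ring
  · intro f₄ hf₄
    constructor
    · intro h
      have hcan := can f₄ hf₄
      rw [h] at hcan
      have G0 := congrArg (coeff (vm 0)) hcan.symm
      have G1 := congrArg (coeff (vm 1)) hcan.symm
      have G2 := congrArg (coeff (vm 2)) hcan.symm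
      have G3 := congrArg (coeff (vm 3)) hcan.symm
      have G4 := congrArg (coeff (vm 4)) hcan.symm
      have G5 := congrArg (coeff (vm 5)) hcan.symm
      have G6 := congrArg (coeff (vm 6)) hcan.symm
      have G7 := congrArg (coeff (vm 7)) hcan.symm
      have G8 := congrArg (coeff (vm 8)) hcan.symm
      have G9 := congrArg (coeff (vm 9)) hcan.symm
      have G10 := congrArg (coeff (vm 10)) hcan.symm
      have G11 := congrArg (coeff (vm 11)) hcan.symm
      have G12 := congrArg (coeff (vm 12)) hcan.symm
      simp only [coeff_add, coeff_monomial, vm_inj, coeff_zero] at G0 G1 G2 G3 G4 G5 G6 G7 G8 G9 G10 G11 G12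
      norm_num at G0 G1 G2 G3 G4 G5 G6 G7 G8 G9 G10 G11 G12
      have h400 : coeff (w3 4 0 0) f₄ = 0 := G0
      have h310 : coeff (w3 3 1 0) f₄ = 0 := G1
      have h301 : coeff (w3 3 0 1) f₄ = 0 := G11
      have h220 : coeff (w3 2 2 0) f₄ = 0 := by linear_combination G2 + G11
      have h202 : coeff (w3 2 0 2) f₄ = 0 := by linear_combination G10 + G1
      have h130 : coeff (w3 1 3 0) f₄ = coeff (w3 2 1 1) f₄ := by linear_combination 4 * G12 - G3
      have h103 : coeff (w3 1 0 3) f₄ = coeff (w3 2 1 1) f₄ := by linear_combination 4 * G12 - G9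
      have h121 : coeff (w3 1 2 1) f₄ = coeff (w3 0 4 0) f₄ := by
        linear_combination -G4 + h202 - 3 * h310
      have h013 : coeff (w3 0 1 3) f₄ = coeff (w3 0 4 0) f₄ := by
        linear_combination G7 + h121 - 2 * h202 + 3 * h310
      have h112 : coeff (w3 1 1 2) f₄ = coeff (w3 0 0 4) f₄ := by
        linear_combination -G8 + h220 - 3 * h301
      have h031 : coeff (w3 0 3 1) f₄ = coeff (w3 0 0 4) f₄ := by
        linear_combination G5 + h112 - 2 * h220 + 3 * h301
      have h022 : coeff (w3 0 2 2) f₄ = 0 := by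
        linear_combination G6 + h130 + h103 - 6 * h400
      refine ⟨monomial (w3 1 0 0) (coeff (w3 2 1 1) f₄) +
          monomial (w3 0 1 0) (coeff (w3 0 4 0) f₄) +
          monomial (w3 0 0 1) (coeff (w3 0 0 4) f₄), ?_, ?_⟩
      · repeat' first
          | exact isHomogeneous_monomial _ (by simp [w3_deg])
          | apply MvPolynomial.IsHomogeneous.add
      · conv_lhs => rw [decomp3 f₄ hf₄]
        rw [h400, h310, h301, h220, h202, h022, h130, h103, h121, h013, h112, h031]
        simp only [map_zero, add_zero, zero_add, mono3]
        ring
    · rintro ⟨ℓ, -, rfl⟩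
      rw [map_mul, f3_image, mul_zero]
end

section
/- The two real polynomials z³ + xy³ + x³y and z³ + xy³ − x³y are right equivalent over ℂ (related by a complex linear change of coordinates) but not right equivalent over ℝ. -/
open MvPolynomial


noncomputable def subst (a b : ℝ) : MvPolynomial (Fin 3) ℝ →ₐ[ℝ] Polynomial ℝ :=
  aeval ![Polynomial.C a * Polynomial.X, Polynomial.C b * Polynomial.X, 0]

lemma subst_coeff_zero (a b : ℝ) (q : MvPolynomial (Fin 3) ℝ) :
    (subst a b q).coeff 0 = constantCoeff q := by
  have h : (Polynomial.aeval (0:ℝ)).comp (subst a b) = aeval (fun _ => (0:ℝ)) := by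
    apply algHom_ext
    intro i
    fin_cases i <;> simp [subst]
  have := congrFun (congrArg DFunLike.coe h) q
  simp only [AlgHom.comp_apply] at this
  rw [Polynomial.coeff_zero_eq_eval_zero, ← Polynomial.coe_aeval_eq_eval, this, aeval_zero']
  rfl

lemma subst_coeff_one (a b : ℝ) (q : MvPolynomial (Fin 3) ℝ) :
    (subst a b q).coeff 1 =
      a * coeff (Finsupp.single 0 1) q + b * coeff (Finsupp.single 1 1) q := by
  induction q using MvPolynomial.induction_on with
  | C r =>
      simp [subst, coeff_C, Finsupp.single_eq_zero, eq_comm]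
  | add p q hp hq =>
      simp only [map_add, Polynomial.coeff_add, coeff_add, hp, hq]; ring
  | mul_X p i hp =>
      have h3 : i = 0 ∨ i = 1 ∨ i = 2 := by fin_cases i <;> simp
      rcases h3 with rfl | rfl | rfl
      · rw [map_mul]
        show ((subst a b p) * (subst a b (X 0))).coeff 1 = _
        have : subst a b (X 0) = Polynomial.C a * Polynomial.X := by simp [subst]
        rw [this, show (subst a b p) * (Polynomial.C a * Polynomial.X)
            = ((subst a b p) * Polynomial.C a) * Polynomial.X by ring,
          Polynomial.coeff_mul_X, Polynomial.coeff_mul_C, subst_coeff_zero,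
          coeff_mul_X' _ 0, coeff_mul_X' _ 0]
        simp [constantCoeff_eq, mul_comm]
      · rw [map_mul]
        show ((subst a b p) * (subst a b (X 1))).coeff 1 = _
        have : subst a b (X 1) = Polynomial.C b * Polynomial.X := by simp [subst]
        rw [this, show (subst a b p) * (Polynomial.C b * Polynomial.X)
            = ((subst a b p) * Polynomial.C b) * Polynomial.X by ring,
          Polynomial.coeff_mul_X, Polynomial.coeff_mul_C, subst_coeff_zero,
          coeff_mul_X' _ 1, coeff_mul_X' _ 1]
        simp [constantCoeff_eq, mul_comm]
      · rw [map_mul]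
        show ((subst a b p) * (subst a b (X 2))).coeff 1 = _
        have : subst a b (X 2) = 0 := by simp [subst]
        rw [this, mul_zero, coeff_mul_X' _ 2, coeff_mul_X' _ 2]
        simp



lemma sos_factor {x y : ℝ} (h : x * y * (x ^ 2 + y ^ 2) = 0) : x = 0 ∨ y = 0 := by
  rcases mul_eq_zero.1 h with h1 | h2
  · exact mul_eq_zero.1 h1
  · left; nlinarith [sq_nonneg x, sq_nonneg y]

lemma realPartLemma :
    ¬ ∃ e : MvPolynomial (Fin 3) ℝ ≃ₐ[ℝ] MvPolynomial (Fin 3) ℝ,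
      (∀ i, constantCoeff (e (X i)) = 0) ∧
      e (X 2 ^ 3 + X 0 * X 1 ^ 3 + X 0 ^ 3 * X 1)
        = (X 2 ^ 3 + X 0 * X 1 ^ 3 - X 0 ^ 3 * X 1) := by
  rintro ⟨e, he0, hef⟩
  set c0 := coeff (Finsupp.single 0 1) (e (X 0)) with hc0
  set d0 := coeff (Finsupp.single 1 1) (e (X 0)) with hd0
  set c1 := coeff (Finsupp.single 0 1) (e (X 1)) with hc1
  set d1 := coeff (Finsupp.single 1 1) (e (X 1)) with hd1
  have key : ∀ a b : ℝ,
      (a * c0 + b * d0) * (a * c1 + b * d1)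
        * ((a * c0 + b * d0) ^ 2 + (a * c1 + b * d1) ^ 2) = a * b ^ 3 - a ^ 3 * b := by
    intro a b
    set p0 := subst a b (e (X 0)) with hp0def
    set p1 := subst a b (e (X 1)) with hp1def
    set p2 := subst a b (e (X 2)) with hp2def
    have heq : p2 ^ 3 + p0 * p1 ^ 3 + p0 ^ 3 * p1
        = Polynomial.C (a * b ^ 3 - a ^ 3 * b) * Polynomial.X ^ 4 := by
      have h1 := congrArg (subst a b) hef
      simp only [map_add, map_sub, map_mul, map_pow] at h1
      have e0 : subst a b (X 0) = Polynomial.C a * Polynomial.X := by simp [subst]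
      have e1 : subst a b (X 1) = Polynomial.C b * Polynomial.X := by simp [subst]
      have e2 : subst a b (X 2) = 0 := by simp [subst]
      rw [e0, e1, e2] at h1
      rw [hp0def, hp1def, hp2def, h1, Polynomial.C_sub, Polynomial.C_mul, Polynomial.C_mul,
        Polynomial.C_pow, Polynomial.C_pow]
      ring
    have hp0 : Polynomial.X ∣ p0 := Polynomial.X_dvd_iff.mpr (by
      rw [hp0def, subst_coeff_zero, he0])
    have hp1 : Polynomial.X ∣ p1 := Polynomial.X_dvd_iff.mpr (by
      rw [hp1def, subst_coeff_zero, he0])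
    have hp2 : Polynomial.X ∣ p2 := Polynomial.X_dvd_iff.mpr (by
      rw [hp2def, subst_coeff_zero, he0])
    obtain ⟨q0, hq0⟩ := hp0
    obtain ⟨q1, hq1⟩ := hp1
    obtain ⟨q2, hq2⟩ := hp2
    rw [hq0, hq1, hq2] at heq
    have hstep : Polynomial.X ^ 3 * q2 ^ 3
        = Polynomial.X ^ 3 * (Polynomial.X *
            (Polynomial.C (a * b ^ 3 - a ^ 3 * b) - q0 * q1 ^ 3 - q0 ^ 3 * q1)) := by
      linear_combination heq
    have h2 := mul_left_cancel₀ (pow_ne_zero 3 (Polynomial.X_ne_zero (R := ℝ))) hstep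
    have hq2e : Polynomial.eval 0 q2 = 0 := by
      have h3 := congrArg (Polynomial.eval 0) h2
      simp only [Polynomial.eval_pow, Polynomial.eval_mul, Polynomial.eval_X,
        zero_mul] at h3
      exact pow_eq_zero_iff (by norm_num) |>.mp h3
    obtain ⟨r, hr⟩ : Polynomial.X ∣ q2 := Polynomial.X_dvd_iff.mpr (by
      rw [Polynomial.coeff_zero_eq_eval_zero]; exact hq2e)
    rw [hr] at h2
    have hstep2 : Polynomial.X * (Polynomial.X ^ 2 * r ^ 3)
        = Polynomial.X * (Polynomial.C (a * b ^ 3 - a ^ 3 * b) - q0 * q1 ^ 3 - q0 ^ 3 * q1) := by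
      linear_combination h2
    have h4 := mul_left_cancel₀ (Polynomial.X_ne_zero (R := ℝ)) hstep2
    have h5 := congrArg (Polynomial.eval 0) h4
    simp only [Polynomial.eval_mul, Polynomial.eval_pow, Polynomial.eval_X,
      Polynomial.eval_sub, Polynomial.eval_C, zero_mul, zero_pow, mul_zero] at h5
    have hu : Polynomial.eval 0 q0 = a * c0 + b * d0 := by
      rw [← Polynomial.coeff_zero_eq_eval_zero,
        show q0.coeff 0 = (Polynomial.X * q0).coeff 1 from (Polynomial.coeff_X_mul q0 0).symm,
        ← hq0, hp0def, subst_coeff_one, hc0, hd0]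
    have hv : Polynomial.eval 0 q1 = a * c1 + b * d1 := by
      rw [← Polynomial.coeff_zero_eq_eval_zero,
        show q1.coeff 0 = (Polynomial.X * q1).coeff 1 from (Polynomial.coeff_X_mul q1 0).symm,
        ← hq1, hp1def, subst_coeff_one, hc1, hd1]
    rw [hu, hv] at h5
    linear_combination h5
  have k1 : c0 * c1 * (c0 ^ 2 + c1 ^ 2) = 0 := by linear_combination key 1 0
  have k2 : d0 * d1 * (d0 ^ 2 + d1 ^ 2) = 0 := by linear_combination key 0 1
  have k3 : (c0 + d0) * (c1 + d1) * ((c0 + d0) ^ 2 + (c1 + d1) ^ 2) = 0 := by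
    linear_combination key 1 1
  have k4 : (2 * c0 + d0) * (2 * c1 + d1)
      * ((2 * c0 + d0) ^ 2 + (2 * c1 + d1) ^ 2) = -6 := by linear_combination key 2 1
  have final : 2 * c0 + d0 = 0 ∨ 2 * c1 + d1 = 0 := by
    rcases sos_factor k1 with h1 | h1 <;> rcases sos_factor k2 with h2 | h2 <;>
      rcases sos_factor k3 with h3 | h3 <;>
      first
        | (left; linarith)
        | (right; linarith)
  rcases final with h | h <;> rw [h] at k4 <;> norm_num at k4



lemma complexPart :
    ∃ e : MvPolynomial (Fin 3) ℂ ≃ₐ[ℂ] MvPolynomial (Fin 3) ℂ,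
      (∀ i, constantCoeff (e (X i)) = 0) ∧
      e (X 2 ^ 3 + X 0 * X 1 ^ 3 + X 0 ^ 3 * X 1)
        = (X 2 ^ 3 + X 0 * X 1 ^ 3 - X 0 ^ 3 * X 1) := by
  obtain ⟨b, hb⟩ := @IsAlgClosed.exists_pow_nat_eq ℂ _ _ (-Complex.I) 4 (by norm_num)
  have hbne : b ≠ 0 := by
    intro h
    rw [h] at hb
    norm_num at hb
  set c : Fin 3 → ℂ := ![Complex.I * b, b, 1] with hc
  have hcne : ∀ i, c i ≠ 0 := by
    intro i; fin_cases i <;> simp [hc, hbne, Complex.I_ne_zero]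
  refine ⟨AlgEquiv.ofAlgHom (aeval fun i => C (c i) * X i) (aeval fun i => C (c i)⁻¹ * X i)
    ?_ ?_, ?_, ?_⟩
  · apply algHom_ext; intro i
    simp only [AlgHom.comp_apply, aeval_X, AlgHom.id_apply]
    rw [map_mul, aeval_C, MvPolynomial.algebraMap_eq, aeval_X, ← mul_assoc, ← C_mul, inv_mul_cancel₀ (hcne i), C_1, one_mul]
  · apply algHom_ext; intro i
    simp only [AlgHom.comp_apply, aeval_X, AlgHom.id_apply]
    rw [map_mul, aeval_C, MvPolynomial.algebraMap_eq, aeval_X, ← mul_assoc, ← C_mul, mul_inv_cancel₀ (hcne i), C_1, one_mul]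
  · intro i
    show constantCoeff ((aeval fun i => C (c i) * X i) (X i)) = 0
    simp
  · have h1 : (Complex.I * b) * b ^ 3 = 1 := by
      have hI := Complex.I_mul_I
      linear_combination Complex.I * hb - hI
    have h2 : (Complex.I * b) ^ 3 * b = -1 := by
      have hI := Complex.I_mul_I
      linear_combination Complex.I ^ 3 * hb - (Complex.I * Complex.I - 1) * hI
    have H1 : (C (Complex.I * b) * C b ^ 3 : MvPolynomial (Fin 3) ℂ) = 1 := by
      rw [← C_pow, ← C_mul, h1, C_1]
    have H2 : (C (Complex.I * b) ^ 3 * C b : MvPolynomial (Fin 3) ℂ) = -1 := by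
      rw [← C_pow, ← C_mul, h2]; simp
    show (aeval fun i => C (c i) * X i) (X 2 ^ 3 + X 0 * X 1 ^ 3 + X 0 ^ 3 * X 1) = _
    simp only [map_add, map_mul, map_pow, aeval_X]
    have hc0 : c 0 = Complex.I * b := rfl
    have hc1 : c 1 = b := rfl
    have hc2 : c 2 = 1 := rfl
    rw [hc0, hc1, hc2, C_1]
    linear_combination (X 0 * X 1 ^ 3 : MvPolynomial (Fin 3) ℂ) * H1 + (X 0 ^ 3 * X 1) * H2


/-- Right equivalence over a field `k`: a polynomial change of coordinates fixing the
origin, i.e. a `k`-algebra automorphism of the polynomial ring sending each variable to a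
polynomial with zero constant term. -/
def RightEquivPoly (k : Type*) [Field k] (f g : MvPolynomial (Fin 3) k) : Prop :=
  ∃ e : MvPolynomial (Fin 3) k ≃ₐ[k] MvPolynomial (Fin 3) k,
    (∀ i, constantCoeff (e (X i)) = 0) ∧ e f = g

/-- `z³ + xy³ + x³y` and `z³ + xy³ − x³y` are right equivalent over `ℂ`
but not right equivalent over `ℝ`. -/
theorem stmt19 :
    RightEquivPoly ℂ (X 2 ^ 3 + X 0 * X 1 ^ 3 + X 0 ^ 3 * X 1)
      (X 2 ^ 3 + X 0 * X 1 ^ 3 - X 0 ^ 3 * X 1) ∧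
    ¬ RightEquivPoly ℝ (X 2 ^ 3 + X 0 * X 1 ^ 3 + X 0 ^ 3 * X 1)
      (X 2 ^ 3 + X 0 * X 1 ^ 3 - X 0 ^ 3 * X 1) := by
  exact ⟨complexPart, realPartLemma⟩
end
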